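/- Let a > 0, let Ω = {x + iy ∈ ℂ : y > 0}, and let F : H → ℝ, F(w) = −2·log(Im w), on the upper half-plane H = {w : Im w > 0}. Then the map U : Ω → H defined by U(x + iy) = x + (i/a)·sinh(a·y) is a harmonic map with respect to the hyperbolic metric: U_{zz̄} + (F_w ∘ U)·U_z·U_{z̄} = 0 on Ω. -/

import Mathlib

/-- Wirtinger derivative `∂f/∂z = (1/2)(∂f/∂x − i ∂f/∂y)`, defined from the real
Fréchet derivative. -/
noncomputable def wderiv (f : ℂ → ℂ) (z : ℂ) : ℂ :=
  (fderiv ℝ f z 1 - Complex.I * fderiv ℝ f z Complex.I) / 2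

/-- Wirtinger derivative `∂f/∂z̄ = (1/2)(∂f/∂x + i ∂f/∂y)`, defined from the real
Fréchet derivative. -/
noncomputable def wderivBar (f : ℂ → ℂ) (z : ℂ) : ℂ :=
  (fderiv ℝ f z 1 + Complex.I * fderiv ℝ f z Complex.I) / 2

lemma liTam_hasFDerivAt (a : ℝ) (w : ℂ) :
    HasFDerivAt (fun z : ℂ => (z.re : ℂ) + Complex.I / (a : ℂ) * ((Real.sinh (a * z.im) : ℝ) : ℂ))
      (Complex.ofRealCLM.comp Complex.reCLM
        + (Complex.I / (a : ℂ) * (Real.cosh (a * w.im) * a)) •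
            (Complex.ofRealCLM.comp Complex.imCLM)) w := by
  have h1 : HasFDerivAt (fun z : ℂ => (z.re : ℂ)) (Complex.ofRealCLM.comp Complex.reCLM) w :=
    (Complex.ofRealCLM.comp Complex.reCLM).hasFDerivAt
  have hin : HasFDerivAt (fun z : ℂ => a * z.im) ((a : ℝ) • Complex.imCLM) w := by
    simpa using Complex.imCLM.hasFDerivAt.const_mul a
  have h2 : HasFDerivAt (fun z : ℂ => Real.sinh (a * z.im))
      (Real.cosh (a * w.im) • ((a : ℝ) • Complex.imCLM)) w :=
    hin.sinh
  have h3 : HasFDerivAt (fun z : ℂ => ((Real.sinh (a * z.im) : ℝ) : ℂ))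
      (Complex.ofRealCLM.comp (Real.cosh (a * w.im) • ((a : ℝ) • Complex.imCLM))) w :=
    Complex.ofRealCLM.hasFDerivAt.comp w h2
  have h4 := h3.const_mul (Complex.I / (a : ℂ))
  have h := h1.add h4
  refine h.congr_fderiv ?_
  ext v
  simp [ContinuousLinearMap.smul_apply, mul_comm, mul_assoc, mul_left_comm]

lemma liTam_wderiv (a : ℝ) (ha : a ≠ 0) (w : ℂ) :
    wderiv (fun z : ℂ => (z.re : ℂ) + Complex.I / (a : ℂ) * ((Real.sinh (a * z.im) : ℝ) : ℂ)) w
      = (1 + Complex.cosh ((a : ℂ) * (w.im : ℂ))) / 2 := by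
  have h := (liTam_hasFDerivAt a w).fderiv
  rw [wderiv, h]
  have ha' : (a : ℂ) ≠ 0 := Complex.ofReal_ne_zero.mpr ha
  simp [ContinuousLinearMap.smul_apply]
  field_simp
  linear_combination (-Complex.cosh ((a : ℂ) * (w.im : ℂ))) * Complex.I_sq

lemma liTam_wderivBar (a : ℝ) (ha : a ≠ 0) (w : ℂ) :
    wderivBar (fun z : ℂ => (z.re : ℂ) + Complex.I / (a : ℂ) * ((Real.sinh (a * z.im) : ℝ) : ℂ)) w
      = (1 - Complex.cosh ((a : ℂ) * (w.im : ℂ))) / 2 := by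
  have h := (liTam_hasFDerivAt a w).fderiv
  rw [wderivBar, h]
  have ha' : (a : ℂ) ≠ 0 := Complex.ofReal_ne_zero.mpr ha
  simp [ContinuousLinearMap.smul_apply]
  field_simp
  linear_combination (Complex.cosh ((a : ℂ) * (w.im : ℂ))) * Complex.I_sq

lemma cosh_wderiv (a : ℝ) (w : ℂ) :
    wderiv (fun z : ℂ => (1 - Complex.cosh ((a : ℂ) * (z.im : ℂ))) / 2) w
      = Complex.I * (Complex.sinh ((a : ℂ) * (w.im : ℂ)) * a) / 4 := by
  have hfn : (fun z : ℂ => (1 - Complex.cosh ((a : ℂ) * (z.im : ℂ))) / 2)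
      = fun z : ℂ => (1 - ((Real.cosh (a * z.im) : ℝ) : ℂ)) / 2 := by
    funext z; push_cast; ring
  rw [hfn]
  have hin : HasFDerivAt (fun z : ℂ => a * z.im) ((a : ℝ) • Complex.imCLM) w := by
    simpa using Complex.imCLM.hasFDerivAt.const_mul a
  have h2 : HasFDerivAt (fun z : ℂ => Real.cosh (a * z.im))
      (Real.sinh (a * w.im) • ((a : ℝ) • Complex.imCLM)) w :=
    hin.cosh
  have h3 : HasFDerivAt (fun z : ℂ => ((Real.cosh (a * z.im) : ℝ) : ℂ))
      (Complex.ofRealCLM.comp (Real.sinh (a * w.im) • ((a : ℝ) • Complex.imCLM))) w :=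
    Complex.ofRealCLM.hasFDerivAt.comp w h2
  have h4 : HasFDerivAt (fun z : ℂ => (1 - ((Real.cosh (a * z.im) : ℝ) : ℂ)) / 2)
      (((2:ℂ)⁻¹) • (0 - Complex.ofRealCLM.comp
        (Real.sinh (a * w.im) • ((a : ℝ) • Complex.imCLM)))) w := by
    have := ((hasFDerivAt_const (1:ℂ) w).sub h3).const_mul ((2:ℂ)⁻¹)
    simpa [div_eq_inv_mul] using this
  rw [wderiv, h4.fderiv]
  simp [ContinuousLinearMap.smul_apply]
  ring

lemma log_wderiv (p : ℂ) (hp : p.im ≠ 0) :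
    wderiv (fun w : ℂ => (((-2 * Real.log w.im : ℝ)) : ℂ)) p = Complex.I * (2 / p.im) / 2 := by
  have h1 : HasFDerivAt (fun w : ℂ => Real.log w.im) ((p.im)⁻¹ • Complex.imCLM) p :=
    (Real.hasDerivAt_log hp).comp_hasFDerivAt p Complex.imCLM.hasFDerivAt
  have h2 : HasFDerivAt (fun w : ℂ => (-2 : ℝ) * Real.log w.im)
      ((-2 : ℝ) • ((p.im)⁻¹ • Complex.imCLM)) p := h1.const_mul (-2)
  have h3 : HasFDerivAt (fun w : ℂ => (((-2 * Real.log w.im : ℝ)) : ℂ))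
      (Complex.ofRealCLM.comp ((-2 : ℝ) • ((p.im)⁻¹ • Complex.imCLM))) p :=
    Complex.ofRealCLM.hasFDerivAt.comp p h2
  rw [wderiv, h3.fderiv]
  simp [ContinuousLinearMap.smul_apply]
  field_simp

/-- The Li–Tam map `U(x+iy) = x + (i/a) sinh(a y)` is a harmonic
map of the upper half-plane into itself with respect to the hyperbolic metric
`F(w) = −2 log(Im w)`. -/
theorem li_tam_harmonic_map
    (a : ℝ) (ha : 0 < a)
    (Ω : Set ℂ) (hΩ : Ω = {z : ℂ | 0 < z.im})
    (F : ℂ → ℝ) (hF : F = fun w => -2 * Real.log w.im)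
    (U : ℂ → ℂ)
    (hU : U = fun z => (z.re : ℂ)
      + Complex.I / (a : ℂ) * ((Real.sinh (a * z.im) : ℝ) : ℂ)) :
    ∀ z ∈ Ω,
      wderiv (fun w => wderivBar U w) z
        + wderiv (fun w => ((F w : ℝ) : ℂ)) (U z) * wderiv U z * wderivBar U z = 0 := by
  intro z hz
  rw [hΩ] at hz
  have hy : 0 < z.im := hz
  have ha0 : a ≠ 0 := ha.ne'
  have ha0' : (a : ℂ) ≠ 0 := Complex.ofReal_ne_zero.mpr ha0
  have hs : 0 < Real.sinh (a * z.im) := by rw [Real.sinh_pos_iff]; positivity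
  have hUim : (U z).im = Real.sinh (a * z.im) / a := by
    have hrepr : U z = (z.re : ℂ) + ((Real.sinh (a * z.im) / a : ℝ) : ℂ) * Complex.I := by
      rw [hU]; push_cast; field_simp
    rw [hrepr]; simp [← Complex.ofReal_mul, Complex.sinh_ofReal_re]
  have hUim' : (U z).im ≠ 0 := by rw [hUim]; positivity
  have hfun : (fun w => wderivBar U w)
      = fun w : ℂ => (1 - Complex.cosh ((a : ℂ) * (w.im : ℂ))) / 2 := by
    funext w; rw [hU, liTam_wderivBar a ha0 w]
  rw [hfun, cosh_wderiv]
  have hFfun : (fun w : ℂ => ((F w : ℝ) : ℂ))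
      = fun w : ℂ => (((-2 * Real.log w.im : ℝ)) : ℂ) := by
    funext w; rw [hF]
  rw [hFfun, log_wderiv _ hUim', hUim, hU, liTam_wderiv a ha0, liTam_wderivBar a ha0]
  have hc := Complex.cosh_sq_sub_sinh_sq ((a : ℂ) * (z.im : ℂ))
  have hs0 : Complex.sinh ((a : ℂ) * (z.im : ℂ)) ≠ 0 := by
    rw [← Complex.ofReal_mul, ← Complex.ofReal_sinh]
    exact_mod_cast hs.ne'
  push_cast
  field_simp
  linear_combination (-4 * Complex.I * (a : ℂ)) * hc
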